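/- Let (Ω, 𝓕) be a measurable space, 𝒫 a set of probability measures on (Ω, 𝓕), N a positive natural number, ε₁, …, ε_N ∈ (0,1) with Σ_{n=1}^N ε_n = ε, and X₁, …, X_N : Ω → ℝ random variables each integrable with respect to every P ∈ 𝒫. Suppose for every n ≤ N and every P ∈ 𝒫 there exists β ∈ ℝ with β + ε_n⁻¹ · E_P[max(X_n − β, 0)] ≤ 0. Then for every P ∈ 𝒫, P({ω : X_n(ω) ≤ 0 for all n ≤ N}) ≥ 1 − ε. -/

import Mathlib

open MeasureTheory

/-- Individual chance constraint from a CVaR certificate. -/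
lemma cvar_single {Ω : Type*} [MeasurableSpace Ω] (P : Measure Ω)
    [IsProbabilityMeasure P] (X : Ω → ℝ) (hX : Integrable X P)
    (ε : ℝ) (hε : 0 < ε) (β : ℝ)
    (hβ : β + ε⁻¹ * ∫ ω, max (X ω - β) 0 ∂P ≤ 0) :
    P {ω | 0 < X ω} ≤ ENNReal.ofReal ε := by
  set f : Ω → ℝ := fun ω => max (X ω - β) 0 with hf
  have hfint : Integrable f P := (hX.sub (integrable_const β)).pos_part
  have hfnn : 0 ≤ f := fun ω => le_max_right _ _
  have hInn : 0 ≤ ∫ ω, f ω ∂P := integral_nonneg hfnn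
  have hεinv : 0 < ε⁻¹ := inv_pos.mpr hε
  have hmul : 0 ≤ ε⁻¹ * ∫ ω, f ω ∂P := mul_nonneg hεinv.le hInn
  have hβ0 : β ≤ 0 := by linarith
  rcases eq_or_lt_of_le hβ0 with hβe | hβlt
  · -- β = 0 : integral of max X 0 is zero, so X ≤ 0 a.e.
    have hmle : ε⁻¹ * ∫ ω, f ω ∂P ≤ 0 := by rw [← hβe] at hβ; linarith
    have hI0 : ∫ ω, f ω ∂P = 0 := by
      have hIle : ∫ ω, f ω ∂P ≤ 0 := by
        have : ε * (ε⁻¹ * ∫ ω, f ω ∂P) ≤ ε * 0 :=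
          mul_le_mul_of_nonneg_left hmle hε.le
        rwa [← mul_assoc, mul_inv_cancel₀ hε.ne', one_mul, mul_zero] at this
      linarith
    have hae : f =ᵐ[P] 0 := (integral_eq_zero_iff_of_nonneg hfnn hfint).mp hI0
    have hnull : P {ω | ¬ f ω = (0 : Ω → ℝ) ω} = 0 := hae
    have hsub : {ω | 0 < X ω} ⊆ {ω | ¬ f ω = (0 : Ω → ℝ) ω} := by
      intro ω hω
      simp only [Set.mem_setOf_eq, Pi.zero_apply] at hω ⊢
      intro hcon
      have hcon' : max (X ω - β) 0 = 0 := hcon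
      have h5 : X ω - β ≤ 0 := hcon' ▸ le_max_left _ _
      have hβz : β = 0 := hβe
      linarith
    calc P {ω | 0 < X ω} ≤ 0 := hnull ▸ measure_mono hsub
      _ ≤ _ := zero_le
  · -- β < 0 : Markov
    set c : ℝ := -β with hc
    have hcpos : 0 < c := by rw [hc]; linarith
    have hmarkov := mul_meas_ge_le_integral_of_nonneg (ae_of_all P hfnn) hfint c
    have h2 : ε⁻¹ * ∫ ω, f ω ∂P ≤ c := by rw [hc]; linarith
    have hIle : ∫ ω, f ω ∂P ≤ ε * c := by
      have h3 : ε * (ε⁻¹ * ∫ ω, f ω ∂P) ≤ ε * c :=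
        mul_le_mul_of_nonneg_left h2 hε.le
      rwa [← mul_assoc, mul_inv_cancel₀ hε.ne', one_mul] at h3
    have hsub : {ω | 0 < X ω} ⊆ {ω | c ≤ f ω} := by
      intro ω hω
      simp only [Set.mem_setOf_eq] at hω ⊢
      refine le_max_of_le_left ?_
      rw [hc]; linarith
    have hfin : P {ω | c ≤ f ω} ≠ ⊤ := measure_ne_top _ _
    have htr : (P {ω | c ≤ f ω}).toReal ≤ ε := by
      have h4 : c * (P {ω | c ≤ f ω}).toReal ≤ c * ε := by
        rw [mul_comm ε c] at hIle; exact hmarkov.trans hIle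
      exact le_of_mul_le_mul_left h4 hcpos
    calc P {ω | 0 < X ω} ≤ P {ω | c ≤ f ω} := measure_mono hsub
      _ ≤ ENNReal.ofReal ε := by
          rw [← ENNReal.ofReal_toReal hfin]
          exact ENNReal.ofReal_le_ofReal htr

/-- Soundness of the CVaR reformulation of the distributionally robust joint chance
constraint: CVaR-type certificates for each individual constraint (with tolerances εₙ
summing to ε) imply the joint chance constraint P(∀ n, Xₙ ≤ 0) ≥ 1 − ε for all P ∈ Ps. -/
theorem cvar_bonferroni_joint_chance_constraint {Ω : Type*} [MeasurableSpace Ω]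
    (Ps : Set (Measure Ω)) (hPs : ∀ P ∈ Ps, IsProbabilityMeasure P)
    (N : ℕ) (hN : 0 < N)
    (X : Fin N → Ω → ℝ) (hX : ∀ n, ∀ P ∈ Ps, Integrable (X n) P)
    (εs : Fin N → ℝ) (hεs : ∀ n, εs n ∈ Set.Ioo (0 : ℝ) 1)
    (ε : ℝ) (hsum : ∑ n, εs n = ε)
    (h : ∀ n, ∀ P ∈ Ps, ∃ β : ℝ, β + (εs n)⁻¹ * ∫ ω, max (X n ω - β) 0 ∂P ≤ 0) :
    ∀ P ∈ Ps, ENNReal.ofReal (1 - ε) ≤ P {ω | ∀ n, X n ω ≤ 0} := by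
  intro P hP
  haveI := hPs P hP
  -- complement bound
  have hcompl : P ({ω | ∀ n, X n ω ≤ 0}ᶜ) ≤ ENNReal.ofReal ε := by
    have hsubset : ({ω | ∀ n, X n ω ≤ 0}ᶜ : Set Ω) ⊆ ⋃ n, {ω | 0 < X n ω} := by
      intro ω hω
      simp only [Set.mem_compl_iff, Set.mem_setOf_eq, not_forall, not_le] at hω
      obtain ⟨n, hn⟩ := hω
      exact Set.mem_iUnion.mpr ⟨n, hn⟩
    calc P ({ω | ∀ n, X n ω ≤ 0}ᶜ) ≤ P (⋃ n, {ω | 0 < X n ω}) := measure_mono hsubset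
      _ ≤ ∑ n, P {ω | 0 < X n ω} := measure_iUnion_fintype_le _ _
      _ ≤ ∑ n, ENNReal.ofReal (εs n) := by
          refine Finset.sum_le_sum fun n _ => ?_
          obtain ⟨β, hβ⟩ := h n P hP
          exact cvar_single P (X n) (hX n P hP) (εs n) (hεs n).1 β hβ
      _ = ENNReal.ofReal ε := by
          rw [← hsum, ← ENNReal.ofReal_sum_of_nonneg]
          exact fun n _ => (hεs n).1.le
  have huniv : (1 : ENNReal) ≤ P {ω | ∀ n, X n ω ≤ 0} + ENNReal.ofReal ε := by
    calc (1 : ENNReal) = P Set.univ := (measure_univ).symm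
      _ = P ({ω | ∀ n, X n ω ≤ 0} ∪ {ω | ∀ n, X n ω ≤ 0}ᶜ) := by
          rw [Set.union_compl_self]
      _ ≤ P {ω | ∀ n, X n ω ≤ 0} + P ({ω | ∀ n, X n ω ≤ 0}ᶜ) := measure_union_le _ _
      _ ≤ _ := add_le_add le_rfl hcompl
  calc ENNReal.ofReal (1 - ε) = ENNReal.ofReal 1 - ENNReal.ofReal ε := by
        rw [ENNReal.ofReal_sub _ (le_trans (hεs ⟨0, hN⟩).1.le (Finset.single_le_sum
          (fun n _ => (hεs n).1.le) (Finset.mem_univ _)) |>.trans hsum.le)]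
    _ ≤ P {ω | ∀ n, X n ω ≤ 0} := by
        rw [ENNReal.ofReal_one]
        exact tsub_le_iff_right.mpr huniv
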